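/- For every n ≥ 213 there exist parameters r, s, i ∈ ℕ and 1 ≤ j ≤ r + 1 such that the extended Wichmann ruler w₁(r, s, i, j) has length n and its number of marks satisfies |w₁(r, s, i, j)| ≤ √(3n) + 4. -/
import Mathlib


/-- The domain of a partial word (a list over `Option A`, where `none` is the hole):
the set of positions carrying a letter. -/
def PartialWord.domain {A : Type*} (w : List (Option A)) : Finset ℕ :=
  (Finset.range w.length).filter fun i => (w.getD i none).isSome

/-- Two partial words are compatible if they have the same length and agree on the
intersection of their domains. -/
def PartialWord.Compatible {A : Type*} (w v : List (Option A)) : Prop :=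
  w.length = v.length ∧
    ∀ i ∈ PartialWord.domain w ∩ PartialWord.domain v, w.getD i none = v.getD i none

/-- A partial word is unbordered if no nonempty proper prefix is compatible with a
suffix of the same length. -/
def PartialWord.Unbordered {A : Type*} (w : List (Option A)) : Prop :=
  ∀ x y : List (Option A), x <+: w → y <:+ w → x ≠ [] → x.length < w.length →
    x.length = y.length → ¬ PartialWord.Compatible x y

/-- The number of holes of a partial word. -/
def PartialWord.holes {A : Type*} (w : List (Option A)) : ℕ :=
  w.countP fun x => x.isNone

/-- `u` repeated `t` times. -/
def listPow {α : Type*} (u : List α) (t : ℕ) : List α := (List.replicate t u).flatten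

/-- A complete sparse ruler of length `n`. -/
def IsCompleteRuler (n : ℕ) (R : Finset ℕ) : Prop :=
  (∀ x ∈ R, x ≤ n) ∧ 0 ∈ R ∧ n ∈ R ∧ ∀ d ≤ n, ∃ r ∈ R, ∃ s ∈ R, r = s + d

/-- Minimum number of marks of a complete sparse ruler of length `n`. -/
noncomputable def M1 (n : ℕ) : ℕ :=
  sInf {k | ∃ R : Finset ℕ, IsCompleteRuler n R ∧ R.card = k}

/-- Maximum number of holes an unbordered partial word of length `n` over an alphabet
of size `k` can have. -/
noncomputable def HB (k n : ℕ) : ℕ :=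
  sSup {h | ∃ w : List (Option (Fin k)),
    w.length = n ∧ PartialWord.Unbordered w ∧ PartialWord.holes w = h}

/-- The ruler (set of partial sums) given by a difference representation. -/
def rulerOfDiffs (D : List ℕ) : Finset ℕ :=
  ((List.range (D.length + 1)).map fun t => (D.take t).sum).toFinset

/-- The difference representation of the extended Wichmann ruler `w₁(r,s,i,j)`. -/
def wichmannDiffs (r s i j : ℕ) : List ℕ :=
  List.replicate r 1 ++ [r + 1] ++ List.replicate r (2 * r + 1) ++
    List.replicate s (4 * r + 3) ++ List.replicate (r + 1) (2 * r + 2) ++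
    List.replicate r 1 ++ List.replicate i (r + 1) ++ [j]

/-- A complete two-dimensional sparse ruler: an `(n,m)`-ruler. -/
def IsRuler2 (n m : ℕ) (R : Finset (ℕ × ℕ)) : Prop :=
  (∀ p ∈ R, p.1 < n ∧ p.2 < m) ∧
    ∀ x y : ℤ, |x| ≤ (n : ℤ) - 1 → |y| ≤ (m : ℤ) - 1 →
      ∃ p ∈ R, ∃ q ∈ R, (p.1 : ℤ) - (q.1 : ℤ) = x ∧ (p.2 : ℤ) - (q.2 : ℤ) = y

/-- Minimum number of marks of an `(n,m)`-ruler. -/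
noncomputable def M2 (n m : ℕ) : ℕ :=
  sInf {k | ∃ R : Finset (ℕ × ℕ), IsRuler2 n m R ∧ R.card = k}

/-- The domain of an `n` by `m` two-dimensional partial word. -/
def domain2 {A : Type*} (n m : ℕ) (w : ℕ × ℕ → Option A) : Finset (ℕ × ℕ) :=
  (Finset.range n ×ˢ Finset.range m).filter fun p => (w p).isSome

/-- An `n` by `m` two-dimensional partial word is unbordered if its domain is an
`(n,m)`-ruler and every nonzero measurable vector can be measured between two
positions carrying distinct letters. -/
def Unbordered2 {A : Type*} (n m : ℕ) (w : ℕ × ℕ → Option A) : Prop :=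
  IsRuler2 n m (domain2 n m w) ∧
    ∀ x y : ℤ, |x| ≤ (n : ℤ) - 1 → |y| ≤ (m : ℤ) - 1 → ¬(x = 0 ∧ y = 0) →
      ∃ p ∈ domain2 n m w, ∃ q ∈ domain2 n m w,
        (p.1 : ℤ) - (q.1 : ℤ) = x ∧ (p.2 : ℤ) - (q.2 : ℤ) = y ∧ w p ≠ w q

/-- Number of holes of an `n` by `m` two-dimensional partial word. -/
def holes2 {A : Type*} (n m : ℕ) (w : ℕ × ℕ → Option A) : ℕ :=
  n * m - (domain2 n m w).card

/-- Maximum number of holes an unbordered `n` by `m` two-dimensional partial word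
over an alphabet of size `k` can have. -/
noncomputable def HB2 (k n m : ℕ) : ℕ :=
  sSup {h | ∃ w : ℕ × ℕ → Option (Fin k), Unbordered2 n m w ∧ holes2 n m w = h}
/-- For every `n ≥ 213` there exist parameters `r, s, i ∈ ℕ` and
`1 ≤ j ≤ r + 1` such that the extended Wichmann ruler `w₁(r,s,i,j)` has length `n` and
its number of marks is at most `√(3n) + 4`. -/
theorem exists_wichmann_of_length (n : ℕ) (hn : 213 ≤ n) :
    ∃ r s i j : ℕ, 1 ≤ j ∧ j ≤ r + 1 ∧
      4 * r * (r + s + 2) + 3 * s + 3 + i * (r + 1) + j = n ∧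
      ((rulerOfDiffs (wichmannDiffs r s i j)).card : ℝ) ≤ Real.sqrt (3 * n) + 4 := by
  obtain ⟨K, hK2, hK3⟩ : ∃ K : ℕ, K ^ 2 ≤ 3 * n ∧ 3 * n < (K + 1) ^ 2 ∧ K = Nat.sqrt (3 * n) :=
    ⟨Nat.sqrt (3 * n), Nat.sqrt_le' _, Nat.lt_succ_sqrt' _, rfl⟩
  obtain ⟨hK3, hKdef⟩ := hK3
  have hK25 : 25 ≤ K := by nlinarith
  obtain ⟨r, hr6, hr6'⟩ : ∃ r : ℕ, 6 * r ≤ K ∧ K < 6 * r + 6 := ⟨K / 6, by omega, by omega⟩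
  have hr4 : 4 ≤ r := by omega
  have h12 : 12 * r * r ≤ n := by nlinarith
  have hcn : 4 * r * r + 8 * r + 4 ≤ n := by nlinarith
  -- key upper bound on n (stated without natural subtraction)
  have hkey : n + (4 * r + 2) * (4 * r + 3) ≤ 4 * r * r + 8 * r + 3 + K * (4 * r + 3) := by
    have hsq : ((K : ℤ) - (6 * r + 3)) ^ 2 ≤ K := by
      have h1 : (K : ℤ) - (6 * r + 3) ≤ 3 := by push_cast; omega
      have h2 : -3 ≤ (K : ℤ) - (6 * r + 3) := by push_cast; omega
      nlinarith [h1, h2, (by exact_mod_cast hK25 : (25:ℤ) ≤ K)]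
    have h3n : 3 * (n : ℤ) ≤ (K : ℤ) ^ 2 + 2 * K := by
      have hx : (K + 1) ^ 2 = K ^ 2 + 2 * K + 1 := by ring
      have : 3 * n ≤ K ^ 2 + 2 * K := by omega
      exact_mod_cast this
    have : (n : ℤ) + (4 * r + 2) * (4 * r + 3) ≤ 4 * r * r + 8 * r + 3 + K * (4 * r + 3) := by
      nlinarith [hsq, h3n]
    exact_mod_cast this
  -- choose s and m
  obtain ⟨s, m, hsm, hm1, hmd, hsK⟩ :
      ∃ s m : ℕ, n = 4 * r * r + 8 * r + 3 + (4 * r + 3) * s + m ∧ 1 ≤ m ∧ m ≤ 4 * r + 3 ∧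
        s + 4 * r + 3 ≤ K := by
    refine ⟨(n - 1 - (4 * r * r + 8 * r + 3)) / (4 * r + 3),
      (n - 1 - (4 * r * r + 8 * r + 3)) % (4 * r + 3) + 1, ?_, by omega, ?_, ?_⟩
    · have := Nat.div_add_mod (n - 1 - (4 * r * r + 8 * r + 3)) (4 * r + 3)
      omega
    · have := Nat.mod_lt (n - 1 - (4 * r * r + 8 * r + 3)) (show 0 < 4 * r + 3 by omega)
      omega
    · have hdm := Nat.div_add_mod (n - 1 - (4 * r * r + 8 * r + 3)) (4 * r + 3)
      have hlt : (4 * r + 3) * ((n - 1 - (4 * r * r + 8 * r + 3)) / (4 * r + 3))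
          < (4 * r + 3) * (K - 4 * r - 2) := by
        have h1 : (4 * r + 3) * ((n - 1 - (4 * r * r + 8 * r + 3)) / (4 * r + 3))
            ≤ n - 1 - (4 * r * r + 8 * r + 3) := by omega
        have h2 : n - 1 - (4 * r * r + 8 * r + 3) < (4 * r + 3) * (K - 4 * r - 2) := by
          have : (4 * r + 3) * (K - 4 * r - 2) + (4 * r + 2) * (4 * r + 3)
              = K * (4 * r + 3) := by
            have h42 : 4 * r + 2 ≤ K := by omega
            cases' Nat.exists_eq_add_of_le h42 with t ht
            rw [ht]
            have h'' : 4 * r + 2 + t - 4 * r - 2 = t := by omega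
            rw [h'']; ring
          omega
        omega
      have := Nat.lt_of_mul_lt_mul_left hlt
      omega
  -- choose i and j
  obtain ⟨i, j, hij, hj1, hjr, hi3⟩ :
      ∃ i j : ℕ, i * (r + 1) + j = m ∧ 1 ≤ j ∧ j ≤ r + 1 ∧ i ≤ 3 := by
    refine ⟨(m - 1) / (r + 1), (m - 1) % (r + 1) + 1, ?_, by omega, ?_, ?_⟩
    · have := Nat.mod_add_div' (m - 1) (r + 1)
      omega
    · have := Nat.mod_lt (m - 1) (show 0 < r + 1 by omega)
      omega
    · have h4 : m - 1 < 4 * (r + 1) := by omega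
      exact Nat.lt_succ_iff.mp ((Nat.div_lt_iff_lt_mul (show 0 < r + 1 by omega)).mpr h4)
  refine ⟨r, s, i, j, hj1, hjr, ?_, ?_⟩
  · have : 4 * r * (r + s + 2) + 3 * s + 3 = 4 * r * r + 8 * r + 3 + (4 * r + 3) * s := by ring
    omega
  · have hcard : (rulerOfDiffs (wichmannDiffs r s i j)).card ≤ 4 * r + s + i + 4 := by
      have h1 : (rulerOfDiffs (wichmannDiffs r s i j)).card ≤ (wichmannDiffs r s i j).length + 1 := by
        refine (List.toFinset_card_le _).trans ?_
        simp
      have h2 : (wichmannDiffs r s i j).length = 4 * r + s + i + 3 := by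
        simp [wichmannDiffs]; ring
      omega
    have hKsqrt : (K : ℝ) ≤ Real.sqrt (3 * n) := by
      have h := Real.nat_sqrt_le_real_sqrt (a := 3 * n)
      rw [← hKdef] at h
      convert h using 2
      push_cast; ring
    have h1 : ((rulerOfDiffs (wichmannDiffs r s i j)).card : ℝ) ≤ ((4 * r + s + i + 4 : ℕ) : ℝ) := by
      exact_mod_cast hcard
    have hle : (4 * r + s + i + 4 : ℕ) ≤ K + 4 := by omega
    calc ((rulerOfDiffs (wichmannDiffs r s i j)).card : ℝ) ≤ ((4 * r + s + i + 4 : ℕ) : ℝ) := h1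
      _ ≤ ((K + 4 : ℕ) : ℝ) := by exact_mod_cast hle
      _ ≤ Real.sqrt (3 * n) + 4 := by push_cast; linarith
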